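/- The coefficients c_{l,ν} in the polynomial expansion μ_ν(λ) = ν! Σ_{l=1}^{⌊ν/2⌋} c_{l,ν} λ^l of Poisson central moments satisfy the recursion (ν+1) c_{l,ν+1} = l c_{l,ν} + c_{l-1,ν-1} for appropriate l, where c_{0,ν-1} = 0; moreover if ν is odd then (ν+1) c_{⌊(ν+1)/2⌋, ν+1} = c_{⌊(ν-1)/2⌋, ν-1}. -/

import Mathlib

open Finset

/-- The coefficient `c_{l,ν} = ∑ ∏_{m=2}^{ν} 1/(k_m! (m!)^{k_m})`, the sum running over
nonnegative integers `k_2, …, k_ν` with `2k_2 + ⋯ + ν k_ν = ν` and `k_2 + ⋯ + k_ν = l`,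
appearing in the polynomial expansion `μ_ν(lam) = ν! ∑_{l=1}^{⌊ν/2⌋} c_{l,ν} lam^l`
of the Poisson central moments. -/
def cCoef (l ν : ℕ) : ℚ :=
  ∑ k ∈ Finset.univ.filter (fun k : Fin (ν + 1) → Fin (ν + 1) =>
      (∀ m : Fin (ν + 1), (m : ℕ) < 2 → (k m : ℕ) = 0) ∧
      (∑ m : Fin (ν + 1), (m : ℕ) * (k m : ℕ)) = ν ∧
      (∑ m : Fin (ν + 1), (k m : ℕ)) = l),
    ∏ m : Fin (ν + 1),
      (1 : ℚ) / (Nat.factorial (k m) * (Nat.factorial (m : ℕ)) ^ ((k m : ℕ)))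


def wA (N : ℕ) (k : Fin (N + 1) → Fin (N + 1)) : ℚ :=
  ∏ m : Fin (N + 1),
      (1 : ℚ) / (Nat.factorial (k m) * (Nat.factorial (m : ℕ)) ^ ((k m : ℕ)))

def AA (l ν N : ℕ) : Finset (Fin (N + 1) → Fin (N + 1)) :=
  Finset.univ.filter (fun k : Fin (N + 1) → Fin (N + 1) =>
      (∀ m : Fin (N + 1), (m : ℕ) < 2 → (k m : ℕ) = 0) ∧
      (∑ m : Fin (N + 1), (m : ℕ) * (k m : ℕ)) = ν ∧
      (∑ m : Fin (N + 1), (k m : ℕ)) = l)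

def cAux (l ν N : ℕ) : ℚ := ∑ k ∈ AA l ν N, wA N k

lemma cCoef_eq_cAux (l ν : ℕ) : cCoef l ν = cAux l ν ν := rfl

lemma mem_AA {l ν N : ℕ} {k : Fin (N + 1) → Fin (N + 1)} :
    k ∈ AA l ν N ↔
      (∀ m : Fin (N + 1), (m : ℕ) < 2 → (k m : ℕ) = 0) ∧
      (∑ m : Fin (N + 1), (m : ℕ) * (k m : ℕ)) = ν ∧
      (∑ m : Fin (N + 1), (k m : ℕ)) = l := by
  simp [AA]

lemma AA_apply_le {l ν N : ℕ} {k : Fin (N + 1) → Fin (N + 1)} (hk : k ∈ AA l ν N)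
    (j : Fin (N + 1)) : (k j : ℕ) ≤ ν := by
  obtain ⟨h1, h2, h3⟩ := mem_AA.mp hk
  by_cases hj : (j : ℕ) < 2
  · simp [h1 j hj]
  · have hle : (j : ℕ) * (k j : ℕ) ≤ ∑ m : Fin (N + 1), (m : ℕ) * (k m : ℕ) :=
      Finset.single_le_sum (f := fun m : Fin (N + 1) => (m : ℕ) * (k m : ℕ))
        (fun _ _ => Nat.zero_le _) (mem_univ j)
    have : (k j : ℕ) ≤ (j : ℕ) * (k j : ℕ) := Nat.le_mul_of_pos_left _ (by omega)
    omega

lemma AA_apply_eq_zero {l ν N : ℕ} {k : Fin (N + 1) → Fin (N + 1)} (hk : k ∈ AA l ν N)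
    {j : Fin (N + 1)} (hj : ν < (j : ℕ)) : (k j : ℕ) = 0 := by
  obtain ⟨h1, h2, h3⟩ := mem_AA.mp hk
  by_contra h
  have hle : (j : ℕ) * (k j : ℕ) ≤ ∑ m : Fin (N + 1), (m : ℕ) * (k m : ℕ) :=
    Finset.single_le_sum (f := fun m : Fin (N + 1) => (m : ℕ) * (k m : ℕ))
      (fun _ _ => Nat.zero_le _) (mem_univ j)
  have : (j : ℕ) ≤ (j : ℕ) * (k j : ℕ) := Nat.le_mul_of_pos_right _ (by omega)
  omega

section Ext
variable {N M : ℕ}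

def extF (h : N ≤ M) (k : Fin (N + 1) → Fin (N + 1)) : Fin (M + 1) → Fin (M + 1) :=
  fun j => if hj : (j : ℕ) < N + 1 then Fin.castLE (by omega) (k ⟨j, hj⟩) else 0

lemma sum_extF {β : Type*} [AddCommMonoid β] (h : N ≤ M) (k : Fin (N + 1) → Fin (N + 1))
    (G : ℕ → ℕ → β) (hG : ∀ j, G j 0 = 0) :
    ∑ j : Fin (M + 1), G (j : ℕ) ((extF h k j : ℕ)) = ∑ j : Fin (N + 1), G (j : ℕ) ((k j : ℕ)) := by
  have e1 : ∀ j : Fin (M + 1), G (j : ℕ) ((extF h k j : ℕ)) =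
      (fun i : ℕ => if hi : i < N + 1 then G i ((k ⟨i, hi⟩ : ℕ)) else 0) (j : ℕ) := by
    intro j
    by_cases hj : (j : ℕ) < N + 1
    · simp [extF, hj]
    · simp [extF, hj, hG]
  calc ∑ j : Fin (M + 1), G (j : ℕ) ((extF h k j : ℕ))
      = ∑ i ∈ range (M + 1), (fun i : ℕ => if hi : i < N + 1 then G i ((k ⟨i, hi⟩ : ℕ)) else 0) i := by
        rw [← Fin.sum_univ_eq_sum_range]; exact Finset.sum_congr rfl (fun j _ => e1 j)
    _ = ∑ i ∈ range (N + 1), (fun i : ℕ => if hi : i < N + 1 then G i ((k ⟨i, hi⟩ : ℕ)) else 0) i := by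
        refine (Finset.sum_subset (by intro x hx; simp only [mem_range] at *; omega) ?_).symm
        intro x _ hx
        simp only [mem_range] at hx
        rw [dif_neg hx]
    _ = ∑ j : Fin (N + 1), G (j : ℕ) ((k j : ℕ)) := by
        rw [← Fin.sum_univ_eq_sum_range]
        exact Finset.sum_congr rfl (fun j _ => by simp [j.isLt])

lemma prod_extF {β : Type*} [CommMonoid β] (h : N ≤ M) (k : Fin (N + 1) → Fin (N + 1))
    (G : ℕ → ℕ → β) (hG : ∀ j, G j 0 = 1) :
    ∏ j : Fin (M + 1), G (j : ℕ) ((extF h k j : ℕ)) = ∏ j : Fin (N + 1), G (j : ℕ) ((k j : ℕ)) := by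
  have e1 : ∀ j : Fin (M + 1), G (j : ℕ) ((extF h k j : ℕ)) =
      (fun i : ℕ => if hi : i < N + 1 then G i ((k ⟨i, hi⟩ : ℕ)) else 1) (j : ℕ) := by
    intro j
    by_cases hj : (j : ℕ) < N + 1
    · simp [extF, hj]
    · simp [extF, hj, hG]
  calc ∏ j : Fin (M + 1), G (j : ℕ) ((extF h k j : ℕ))
      = ∏ i ∈ range (M + 1), (fun i : ℕ => if hi : i < N + 1 then G i ((k ⟨i, hi⟩ : ℕ)) else 1) i := by
        rw [← Fin.prod_univ_eq_prod_range]; exact Finset.prod_congr rfl (fun j _ => e1 j)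
    _ = ∏ i ∈ range (N + 1), (fun i : ℕ => if hi : i < N + 1 then G i ((k ⟨i, hi⟩ : ℕ)) else 1) i := by
        refine (Finset.prod_subset (by intro x hx; simp only [mem_range] at *; omega) ?_).symm
        intro x _ hx
        simp only [mem_range] at hx
        rw [dif_neg hx]
    _ = ∏ j : Fin (N + 1), G (j : ℕ) ((k j : ℕ)) := by
        rw [← Fin.prod_univ_eq_prod_range]
        exact Finset.prod_congr rfl (fun j _ => by simp [j.isLt])

end Ext

lemma wA_extF {N M : ℕ} (h : N ≤ M) (k : Fin (N + 1) → Fin (N + 1)) :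
    wA M (extF h k) = wA N k := by
  exact prod_extF h k
    (fun i v => (1 : ℚ) / (Nat.factorial v * (Nat.factorial i) ^ v)) (by simp)

lemma extF_mem {l ν N M : ℕ} (h : N ≤ M) {k : Fin (N + 1) → Fin (N + 1)}
    (hk : k ∈ AA l ν N) : extF h k ∈ AA l ν M := by
  obtain ⟨h1, h2, h3⟩ := mem_AA.mp hk
  rw [mem_AA]
  refine ⟨?_, ?_, ?_⟩
  · intro j hj
    by_cases hjN : (j : ℕ) < N + 1
    · simp only [extF, dif_pos hjN, Fin.coe_castLE]
      exact h1 ⟨j, hjN⟩ hj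
    · simp [extF, hjN]
  · exact (sum_extF h k (fun i v => i * v) (by simp)).trans h2
  · exact (sum_extF h k (fun _ v => v) (by simp)).trans h3

lemma cAux_stable (l ν N M : ℕ) (hν : ν ≤ N) (h : N ≤ M) :
    cAux l ν N = cAux l ν M := by
  have hval : ∀ (K : Fin (M + 1) → Fin (M + 1)), K ∈ AA l ν M → ∀ j : Fin (N + 1),
      (K (Fin.castLE (by omega) j) : ℕ) < N + 1 := by
    intro K hK j
    have := AA_apply_le hK (Fin.castLE (by omega) j)
    omega
  have hres : ∀ (K : Fin (M + 1) → Fin (M + 1)) (hK : K ∈ AA l ν M),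
      extF h (fun j => (⟨(K (Fin.castLE (by omega) j) : ℕ), hval K hK j⟩ : Fin (N + 1))) = K := by
    intro K hK
    funext j
    by_cases hjN : (j : ℕ) < N + 1
    · simp only [extF, dif_pos hjN]
      apply Fin.ext
      simp only [Fin.coe_castLE]
      have he : (Fin.castLE (by omega : N + 1 ≤ M + 1) (⟨(j : ℕ), hjN⟩ : Fin (N + 1))) = j :=
        Fin.ext rfl
      rw [he]
    · simp only [extF, dif_neg hjN]
      apply Fin.ext
      have : (K j : ℕ) = 0 := AA_apply_eq_zero hK (by omega)
      simp [this]
  refine Finset.sum_bij' (fun k _ => extF h k)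
    (fun K hK => fun j => (⟨(K (Fin.castLE (by omega) j) : ℕ), hval K hK j⟩ : Fin (N + 1)))
    (fun k hk => extF_mem h hk) ?_ ?_ ?_ ?_
  · -- res K ∈ AA l ν N
    intro K hK
    obtain ⟨h1, h2, h3⟩ := mem_AA.mp hK
    rw [mem_AA]
    refine ⟨?_, ?_, ?_⟩
    · intro j hj
      exact h1 (Fin.castLE (by omega) j) (by simpa using hj)
    · have e := sum_extF h
        (fun j => (⟨(K (Fin.castLE (by omega) j) : ℕ), hval K hK j⟩ : Fin (N + 1)))
        (fun i v => i * v) (by simp)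
      rw [hres K hK] at e
      exact e.symm.trans h2
    · have e := sum_extF h
        (fun j => (⟨(K (Fin.castLE (by omega) j) : ℕ), hval K hK j⟩ : Fin (N + 1)))
        (fun _ v => v) (by simp)
      rw [hres K hK] at e
      exact e.symm.trans h3
  · -- left inverse
    intro k hk
    funext j
    apply Fin.ext
    simp [extF, j.isLt]
  · -- right inverse
    intro K hK
    exact hres K hK
  · -- weights
    intro k hk
    exact (wA_extF h k).symm

lemma sum_comp_update {γ : Type*} [AddCommMonoid γ] {n : ℕ} [NeZero n] (F : Fin n → ℕ → γ)
    (k : Fin n → Fin n) (i : Fin n) (a : Fin n) :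
    ∑ j, F j ((Function.update k i a j : ℕ)) = F i (a : ℕ) + ∑ j ∈ univ.erase i, F j ((k j : ℕ)) := by
  rw [← Finset.add_sum_erase _ (fun j => F j ((Function.update k i a j : ℕ))) (mem_univ i)]
  congr 1
  · rw [Function.update_self]
  · exact Finset.sum_congr rfl fun j hj => by
      rw [Function.update_of_ne (Finset.ne_of_mem_erase hj)]

lemma sum_split {γ : Type*} [AddCommMonoid γ] {n : ℕ} (F : Fin n → ℕ → γ)
    (k : Fin n → Fin n) (i : Fin n) :
    ∑ j, F j ((k j : ℕ)) = F i ((k i : ℕ)) + ∑ j ∈ univ.erase i, F j ((k j : ℕ)) :=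
  (Finset.add_sum_erase _ _ (mem_univ i)).symm

lemma key_scalar (m c : ℕ) (hc : 1 ≤ c) :
    (c : ℚ) * ((1 : ℚ) / (Nat.factorial c * (Nat.factorial m) ^ c)) =
      (1 / (Nat.factorial m : ℚ)) *
        ((1 : ℚ) / (Nat.factorial (c - 1) * (Nat.factorial m) ^ (c - 1))) := by
  obtain ⟨c', rfl⟩ : ∃ c', c = c' + 1 := ⟨c - 1, by omega⟩
  have h1 : (Nat.factorial (c' + 1) : ℚ) = (c' + 1) * Nat.factorial c' := by
    rw [Nat.factorial_succ]; push_cast; ring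
  have h2 : ((Nat.factorial m : ℚ)) ^ (c' + 1) = (Nat.factorial m : ℚ) ^ c' * Nat.factorial m := by
    rw [pow_succ]
  have hm : (Nat.factorial m : ℚ) ≠ 0 := Nat.cast_ne_zero.mpr (Nat.factorial_ne_zero m)
  have hcf : (Nat.factorial c' : ℚ) ≠ 0 := Nat.cast_ne_zero.mpr (Nat.factorial_ne_zero c')
  have hmp : (Nat.factorial m : ℚ) ^ c' ≠ 0 := pow_ne_zero _ hm
  simp only [Nat.add_sub_cancel, h1, h2]
  field_simp
  push_cast
  ring

lemma arith1 (m c S v : ℕ) (hc : 1 ≤ c) (h : m * c + S = v) : m * (c - 1) + S = v - m := by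
  obtain ⟨c', rfl⟩ : ∃ c', c = c' + 1 := ⟨c - 1, by omega⟩
  rw [Nat.mul_succ] at h
  simp only [Nat.add_sub_cancel]
  generalize m * c' = a at *
  omega

lemma arith2 (m c S v : ℕ) (hm : m ≤ v) (h : m * c + S = v - m) : m * (c + 1) + S = v := by
  rw [Nat.mul_succ]
  generalize m * c = a at *
  omega

lemma arith3 (c S l : ℕ) (hc : 1 ≤ c) (h : c + S = l) : (c - 1) + S = l - 1 := by omega

lemma arith4 (c S l : ℕ) (hl : 1 ≤ l) (h : c + S = l - 1) : (c + 1) + S = l := by omega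

lemma erase_sum {l ν N : ℕ} (hl : 1 ≤ l) (hνN : ν ≤ N) (mF : Fin (N + 1))
    (hm2 : 2 ≤ (mF : ℕ)) (hmν : (mF : ℕ) ≤ ν) :
    ∑ k ∈ AA l ν N, ((k mF : ℕ) : ℚ) * wA N k
      = (1 / (Nat.factorial (mF : ℕ) : ℚ)) * cAux (l - 1) (ν - (mF : ℕ)) N := by
  rw [← Finset.sum_filter_of_ne (p := fun k => (k mF : ℕ) ≠ 0)
    (by
      intro k _ hne
      intro hz
      exact hne (by rw [hz]; simp))]
  rw [cAux, Finset.mul_sum]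
  refine Finset.sum_bij'
    (fun k _ => Function.update k mF (⟨(k mF : ℕ) - 1, by have := (k mF).isLt; omega⟩ : Fin (N + 1)))
    (fun K hK => Function.update K mF (⟨(K mF : ℕ) + 1, by
      have := AA_apply_le hK mF; omega⟩ : Fin (N + 1)))
    ?_ ?_ ?_ ?_ ?_
  · -- dec k ∈ AA (l-1) (ν-m) N
    intro k hk
    rw [Finset.mem_filter] at hk
    obtain ⟨hk, hc⟩ := hk
    obtain ⟨h1, h2, h3⟩ := mem_AA.mp hk
    have hc1 : 1 ≤ (k mF : ℕ) := Nat.one_le_iff_ne_zero.mpr hc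
    beta_reduce
    rw [mem_AA]
    refine ⟨?_, ?_, ?_⟩
    · intro j hj
      have hne : j ≠ mF := by intro e; rw [e] at hj; omega
      rw [Function.update_of_ne hne]
      exact h1 j hj
    · rw [sum_comp_update (fun j v => (j : ℕ) * v)]
      rw [sum_split (fun j v => (j : ℕ) * v) k mF] at h2
      exact arith1 (mF : ℕ) (k mF : ℕ) _ ν hc1 h2
    · rw [sum_comp_update (fun _ v => v)]
      rw [sum_split (fun _ v => v) k mF] at h3
      exact arith3 (k mF : ℕ) _ l hc1 h3
  · -- inc K ∈ filter
    intro K hK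
    obtain ⟨h1, h2, h3⟩ := mem_AA.mp hK
    beta_reduce
    rw [Finset.mem_filter]
    constructor
    · rw [mem_AA]
      refine ⟨?_, ?_, ?_⟩
      · intro j hj
        have hne : j ≠ mF := by intro e; rw [e] at hj; omega
        rw [Function.update_of_ne hne]
        exact h1 j hj
      · rw [sum_comp_update (fun j v => (j : ℕ) * v)]
        rw [sum_split (fun j v => (j : ℕ) * v) K mF] at h2
        exact arith2 (mF : ℕ) (K mF : ℕ) _ ν (by omega) h2
      · rw [sum_comp_update (fun _ v => v)]
        rw [sum_split (fun _ v => v) K mF] at h3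
        exact arith4 (K mF : ℕ) _ l hl h3
    · simp [Function.update_self]
  · -- left inverse
    intro k hk
    rw [Finset.mem_filter] at hk
    have hc1 : 1 ≤ (k mF : ℕ) := Nat.one_le_iff_ne_zero.mpr hk.2
    funext j
    by_cases hj : j = mF
    · subst hj
      apply Fin.ext
      simp only [Function.update_self]
      omega
    · simp only [Function.update_of_ne hj]
  · -- right inverse
    intro K hK
    funext j
    by_cases hj : j = mF
    · subst hj
      apply Fin.ext
      simp only [Function.update_self]
      omega
    · simp only [Function.update_of_ne hj]
  · -- weights
    intro k hk
    rw [Finset.mem_filter] at hk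
    have hc1 : 1 ≤ (k mF : ℕ) := Nat.one_le_iff_ne_zero.mpr hk.2
    beta_reduce
    have hw1 : wA N k = ((1 : ℚ) / (Nat.factorial ((k mF : ℕ)) * (Nat.factorial (mF : ℕ)) ^ ((k mF : ℕ))))
        * ∏ j ∈ univ.erase mF, (1 : ℚ) / (Nat.factorial (k j) * (Nat.factorial (j : ℕ)) ^ ((k j : ℕ))) := by
      rw [wA, ← Finset.mul_prod_erase _ _ (mem_univ mF)]
    have hw2 : wA N (Function.update k mF (⟨(k mF : ℕ) - 1, by have := (k mF).isLt; omega⟩ : Fin (N + 1)))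
        = ((1 : ℚ) / (Nat.factorial ((k mF : ℕ) - 1) * (Nat.factorial (mF : ℕ)) ^ ((k mF : ℕ) - 1)))
        * ∏ j ∈ univ.erase mF, (1 : ℚ) / (Nat.factorial (k j) * (Nat.factorial (j : ℕ)) ^ ((k j : ℕ))) := by
      rw [wA, ← Finset.mul_prod_erase _ _ (mem_univ mF)]
      congr 1
      · rw [Function.update_self]
      · exact Finset.prod_congr rfl fun j hj => by
          rw [Function.update_of_ne (Finset.ne_of_mem_erase hj)]
    rw [hw1, hw2, ← mul_assoc, ← mul_assoc, key_scalar _ _ hc1]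

lemma core {l ν N : ℕ} (hl : 1 ≤ l) (hνN : ν ≤ N) (c : ℕ → ℚ) :
    ∑ k ∈ AA l ν N, (∑ mF : Fin (N + 1), c (mF : ℕ) * ((k mF : ℕ) : ℚ)) * wA N k
      = ∑ m ∈ Icc 2 ν, c m * ((1 / (Nat.factorial m : ℚ)) * cAux (l - 1) (ν - m) N) := by
  have step1 : ∑ k ∈ AA l ν N, (∑ mF : Fin (N + 1), c (mF : ℕ) * ((k mF : ℕ) : ℚ)) * wA N k
      = ∑ mF : Fin (N + 1), c (mF : ℕ) * ∑ k ∈ AA l ν N, ((k mF : ℕ) : ℚ) * wA N k := by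
    simp_rw [Finset.sum_mul]
    rw [Finset.sum_comm]
    refine Finset.sum_congr rfl fun mF _ => ?_
    rw [Finset.mul_sum]
    exact Finset.sum_congr rfl fun k _ => by ring
  rw [step1]
  rw [← Finset.sum_filter_of_ne
    (p := fun mF : Fin (N + 1) => 2 ≤ (mF : ℕ) ∧ (mF : ℕ) ≤ ν)
    (by
      intro mF _ hne
      by_contra hP
      apply hne
      have hz : ∑ k ∈ AA l ν N, ((k mF : ℕ) : ℚ) * wA N k = 0 := by
        apply Finset.sum_eq_zero
        intro k hk
        rcases (by omega : (mF : ℕ) < 2 ∨ ν < (mF : ℕ)) with hlt | hgt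
        · rw [(mem_AA.mp hk).1 mF hlt]
          simp
        · rw [AA_apply_eq_zero hk hgt]
          simp
      rw [hz, mul_zero])]
  refine Finset.sum_bij' (fun mF _ => (mF : ℕ))
    (fun m hm => (⟨m, by rw [mem_Icc] at hm; omega⟩ : Fin (N + 1))) ?_ ?_ ?_ ?_ ?_
  · intro mF hmF
    rw [Finset.mem_filter] at hmF
    rw [mem_Icc]
    exact hmF.2
  · intro m hm
    rw [mem_Icc] at hm
    rw [Finset.mem_filter]
    exact ⟨mem_univ _, hm⟩
  · intro mF _
    exact Fin.ext rfl
  · intro m _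
    rfl
  · intro mF hmF
    rw [Finset.mem_filter] at hmF
    beta_reduce
    rw [erase_sum hl hνN mF hmF.2.1 hmF.2.2]

lemma L3B {l ν N : ℕ} (hl : 1 ≤ l) (hνN : ν ≤ N) :
    (l : ℚ) * cAux l ν N
      = ∑ m ∈ Icc 2 ν, (1 / (Nat.factorial m : ℚ)) * cAux (l - 1) (ν - m) N := by
  have h := core hl hνN (fun _ => (1 : ℚ))
  simp only [one_mul] at h
  rw [← h, cAux, Finset.mul_sum]
  refine Finset.sum_congr rfl fun k hk => ?_
  congr 1
  have h3 := (mem_AA.mp hk).2.2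
  rw [← h3]
  push_cast
  rfl

lemma L3A {l ν N : ℕ} (hl : 1 ≤ l) (hνN : ν ≤ N) :
    (ν : ℚ) * cAux l ν N
      = ∑ m ∈ Icc 2 ν, (m : ℚ) * ((1 / (Nat.factorial m : ℚ)) * cAux (l - 1) (ν - m) N) := by
  have h := core hl hνN (fun m => (m : ℚ))
  rw [← h, cAux, Finset.mul_sum]
  refine Finset.sum_congr rfl fun k hk => ?_
  congr 1
  have h2 := (mem_AA.mp hk).2.1
  rw [← h2]
  push_cast
  rfl

lemma cCoef_vanish {l ν : ℕ} (h : ν < 2 * l) : cCoef l ν = 0 := by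
  rw [cCoef_eq_cAux, cAux]
  have he : AA l ν ν = ∅ := by
    rw [Finset.eq_empty_iff_forall_notMem]
    intro k hk
    obtain ⟨h1, h2, h3⟩ := mem_AA.mp hk
    have hge : ∑ m : Fin (ν + 1), 2 * (k m : ℕ) ≤ ∑ m : Fin (ν + 1), (m : ℕ) * (k m : ℕ) := by
      refine Finset.sum_le_sum fun m _ => ?_
      by_cases hm : (m : ℕ) < 2
      · rw [h1 m hm]; simp
      · exact Nat.mul_le_mul_right _ (by omega)
    rw [← Finset.mul_sum, h3, h2] at hge
    omega
  rw [he, Finset.sum_empty]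

lemma cCoef_main (ν l : ℕ) (hν : 2 ≤ ν) (hl : 1 ≤ l) :
    ((ν : ℚ) + 1) * cCoef l (ν + 1) = (l : ℚ) * cCoef l ν + cCoef (l - 1) (ν - 1) := by
  have hA := L3A (l := l) (ν := ν + 1) (N := ν + 1) hl le_rfl
  have hB := L3B (l := l) (ν := ν) (N := ν + 1) hl (by omega)
  have t1 : cCoef l (ν + 1) = cAux l (ν + 1) (ν + 1) := rfl
  have t2 : cCoef l ν = cAux l ν (ν + 1) :=
    (cCoef_eq_cAux l ν).trans (cAux_stable l ν ν (ν + 1) le_rfl (by omega))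
  have t3 : cCoef (l - 1) (ν - 1) = cAux (l - 1) (ν - 1) (ν + 1) :=
    (cCoef_eq_cAux _ _).trans (cAux_stable _ _ _ _ le_rfl (by omega))
  have hsplit : Icc 2 (ν + 1) = insert 2 (Icc 3 (ν + 1)) := by
    ext x; simp only [mem_Icc, mem_insert]; omega
  have h2ni : (2 : ℕ) ∉ Icc 3 (ν + 1) := by simp [mem_Icc]
  rw [hsplit, Finset.sum_insert h2ni] at hA
  have hterm : ((2 : ℕ) : ℚ) * ((1 / (Nat.factorial 2 : ℚ)) * cAux (l - 1) (ν + 1 - 2) (ν + 1))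
      = cAux (l - 1) (ν - 1) (ν + 1) := by
    have e : ν + 1 - 2 = ν - 1 := by omega
    rw [e]
    norm_num [Nat.factorial]
    ring
  have hre : ∑ m ∈ Icc 3 (ν + 1), (m : ℚ) * ((1 / (Nat.factorial m : ℚ)) * cAux (l - 1) (ν + 1 - m) (ν + 1))
      = ∑ m ∈ Icc 2 ν, (1 / (Nat.factorial m : ℚ)) * cAux (l - 1) (ν - m) (ν + 1) := by
    refine (Finset.sum_bij' (fun m _ => m + 1) (fun m _ => m - 1) ?_ ?_ ?_ ?_ ?_).symm
    · intro m hm; simp only [mem_Icc] at hm ⊢; omega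
    · intro m hm; simp only [mem_Icc] at hm ⊢; omega
    · intro m hm; show m + 1 - 1 = m; omega
    · intro m hm; rw [mem_Icc] at hm; show m - 1 + 1 = m; omega
    · intro m hm
      rw [mem_Icc] at hm
      have e1 : ν + 1 - (m + 1) = ν - m := by omega
      have e2 : ((Nat.factorial (m + 1) : ℚ)) = (m + 1) * Nat.factorial m := by
        rw [Nat.factorial_succ]; push_cast; ring
      beta_reduce
      rw [e1, e2]
      have hm0 : (Nat.factorial m : ℚ) ≠ 0 := Nat.cast_ne_zero.mpr (Nat.factorial_ne_zero m)
      have hm1 : ((m : ℚ) + 1) ≠ 0 := by positivity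
      field_simp
      push_cast
      ring
  rw [t1, t2, t3]
  have hcast : ((ν : ℚ) + 1) = (((ν + 1 : ℕ)) : ℚ) := by push_cast; ring
  rw [hcast, hA, hterm, hre, ← hB]
  ring

/-- Recursion for the coefficients of the Poisson central-moment polynomials:
`(ν+1) c_{l,ν+1} = l c_{l,ν} + c_{l-1,ν-1}` (with `c_{0,ν-1} = 0`) for the appropriate
range of `l`, together with the leading-coefficient identity
`(ν+1) c_{⌊(ν+1)/2⌋,ν+1} = c_{⌊(ν-1)/2⌋,ν-1}` when `ν` is odd. -/
theorem cCoef_recursion (ν : ℕ) (hν : 2 ≤ ν) :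
    (Even ν → ∀ l : ℕ, 1 ≤ l → l ≤ (ν + 1) / 2 →
      ((ν : ℚ) + 1) * cCoef l (ν + 1) = (l : ℚ) * cCoef l ν + cCoef (l - 1) (ν - 1)) ∧
    (Odd ν →
      (∀ l : ℕ, 1 ≤ l → l ≤ (ν + 1) / 2 - 1 →
        ((ν : ℚ) + 1) * cCoef l (ν + 1) = (l : ℚ) * cCoef l ν + cCoef (l - 1) (ν - 1)) ∧
      ((ν : ℚ) + 1) * cCoef ((ν + 1) / 2) (ν + 1) = cCoef ((ν - 1) / 2) (ν - 1)) := by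
  constructor
  · intro _ l hl _
    exact cCoef_main ν l hν hl
  · intro hodd
    refine ⟨fun l hl _ => cCoef_main ν l hν hl, ?_⟩
    obtain ⟨t, ht⟩ := hodd
    have hm := cCoef_main ν ((ν + 1) / 2) hν (by omega)
    have hz : cCoef ((ν + 1) / 2) ν = 0 := cCoef_vanish (by omega)
    rw [hz, mul_zero, zero_add] at hm
    rw [show (ν - 1) / 2 = (ν + 1) / 2 - 1 from by omega]
    exact hm
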